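/- Let n ≥ 1 and let H ⊆ ℂⁿ be a ℂ-linear subspace with dim_ℂ H = k. Then for every ε > 0 and every N₀ ∈ ℕ there exist an integer N ≥ N₀ and finite sets X₁, …, Xₙ ⊆ ℂ with |Xᵢ| ≤ N for all i such that |H ∩ (X₁ × ⋯ × Xₙ)| ≥ N^{k − ε}. -/

import Mathlib

set_option maxHeartbeats 1000000

noncomputable section

open Submodule Set Module Pointwise

namespace Statement7Aux

/-- Injectivity of coefficient-combinations of a linearly independent family. -/
lemma inj_sum_smul {R M ι : Type*} [Ring R] [AddCommGroup M] [Module R M] [Fintype ι]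
    {v : ι → M} (hv : LinearIndependent R v) :
    Function.Injective (fun c : ι → R => ∑ i, c i • v i) := by
  intro a b hab
  have h : ∑ i, (a i - b i) • v i = 0 := by
    simp only [sub_smul, Finset.sum_sub_distrib]
    exact sub_eq_zero_of_eq hab
  have h2 := Fintype.linearIndependent_iff.mp hv _ h
  funext i
  exact sub_eq_zero.mp (h2 i)

/-- Every element of the `D`-th power of `insert 1 (range g)` is a monomial in `g`
of multidegree at most `D` in each variable. -/
lemma pow_subset_monomials {ι : Type*} [Fintype ι] [DecidableEq ι] (g : ι → ℂ) :
    ∀ D : ℕ, (insert (1:ℂ) (Set.range g)) ^ D ⊆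
      (fun e : ι → ℕ => ∏ p, g p ^ e p) '' {e | ∀ p, e p ≤ D} := by
  intro D
  induction D with
  | zero =>
    intro x hx
    rw [pow_zero, Set.mem_one] at hx
    exact ⟨fun _ => 0, fun p => le_refl 0, by simp [hx]⟩
  | succ D ih =>
    intro x hx
    rw [pow_succ] at hx
    obtain ⟨y, hy, a, ha, rfl⟩ := hx
    obtain ⟨e, he, rfl⟩ := ih hy
    rw [Set.mem_insert_iff] at ha
    rcases ha with rfl | ha
    · exact ⟨e, fun p => (he p).trans (Nat.le_succ D), by simp⟩
    · obtain ⟨p0, rfl⟩ := ha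
      refine ⟨e + Pi.single p0 1, ?_, ?_⟩
      · intro p
        have hp := he p
        simp only [Pi.add_apply, Pi.single_apply]
        split_ifs <;> omega
      · simp only [Pi.add_apply, pow_add]
        rw [Finset.prod_mul_distrib]
        congr 1
        rw [Finset.prod_eq_single p0 (fun b _ hb => by simp [Pi.single_eq_of_ne hb])
          (fun h => absurd (Finset.mem_univ p0) h)]
        simp

/-- If a monotone-in-spirit sequence `d` with `1 ≤ d D` is polynomially bounded, then
some ratio `d (D+1) / d D` is at most `1 + δ`. -/
lemma exists_slow_growth (t : ℕ) (d : ℕ → ℕ) (hd1 : ∀ D, 1 ≤ d D)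
    (hpoly : ∀ D, d D ≤ (D + 1) ^ t) {δ : ℝ} (hδ : 0 < δ) :
    ∃ D, 1 ≤ D ∧ (d (D + 1) : ℝ) ≤ (1 + δ) * d D := by
  by_contra hcon
  push_neg at hcon
  have hgrow : ∀ m : ℕ, (1 + δ) ^ m ≤ (d (m + 1) : ℝ) := by
    intro m
    induction m with
    | zero => simpa using (by exact_mod_cast hd1 1 : (1:ℝ) ≤ d 1)
    | succ m ih =>
      have h2 := hcon (m + 1) (Nat.le_add_left 1 m)
      calc (1 + δ) ^ (m + 1) = (1 + δ) ^ m * (1 + δ) := pow_succ _ _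
        _ ≤ (d (m + 1) : ℝ) * (1 + δ) := mul_le_mul_of_nonneg_right ih (by linarith)
        _ = (1 + δ) * d (m + 1) := mul_comm _ _
        _ ≤ d (m + 1 + 1) := le_of_lt h2
  have hlo := isLittleO_pow_const_const_pow_of_one_lt (R := ℝ) t
    (by linarith : (1:ℝ) < 1 + δ)
  have hc : (0:ℝ) < 1 / (2 ^ t * 2) := by positivity
  have hev := hlo.def hc
  rw [Filter.eventually_atTop] at hev
  obtain ⟨m0, hm0⟩ := hev
  set m := max m0 2 with hmdef
  have h1 := hm0 m (le_max_left _ _)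
  have hm2 : 2 ≤ m := le_max_right _ _
  have hpow_pos : (0:ℝ) < (1 + δ) ^ m := pow_pos (by linarith) m
  have hnorm1 : ‖((m:ℝ)) ^ t‖ = ((m:ℝ)) ^ t := by
    rw [Real.norm_eq_abs, abs_of_nonneg (by positivity)]
  have hnorm2 : ‖(1 + δ) ^ m‖ = (1 + δ) ^ m := by
    rw [Real.norm_eq_abs, abs_of_nonneg (by positivity)]
  rw [hnorm1, hnorm2] at h1
  have hchain : (1 + δ) ^ m ≤ 2 ^ t * ((m:ℝ)) ^ t := by
    have hA := hgrow m
    have hB : (d (m + 1) : ℝ) ≤ ((m + 2 : ℕ) : ℝ) ^ t := by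
      exact_mod_cast hpoly (m + 1)
    have hC : ((m + 2 : ℕ) : ℝ) ^ t ≤ (2 * (m:ℝ)) ^ t := by
      apply pow_le_pow_left₀ (by positivity)
      push_cast
      have : (2:ℝ) ≤ (m:ℝ) := by exact_mod_cast hm2
      linarith
    calc (1 + δ) ^ m ≤ (d (m + 1) : ℝ) := hA
      _ ≤ ((m + 2 : ℕ) : ℝ) ^ t := hB
      _ ≤ (2 * (m:ℝ)) ^ t := hC
      _ = 2 ^ t * ((m:ℝ)) ^ t := mul_pow 2 _ t
  have h2t : (0:ℝ) < 2 ^ t := by positivity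
  have : (1 + δ) ^ m ≤ 2 ^ t * (1 / (2 ^ t * 2) * (1 + δ) ^ m) := by
    calc (1 + δ) ^ m ≤ 2 ^ t * ((m:ℝ)) ^ t := hchain
      _ ≤ 2 ^ t * (1 / (2 ^ t * 2) * (1 + δ) ^ m) :=
        mul_le_mul_of_nonneg_left h1 (by positivity)
  have heq : 2 ^ t * (1 / ((2:ℝ) ^ t * 2) * (1 + δ) ^ m) = (1 + δ) ^ m / 2 := by
    field_simp
  rw [heq] at this
  linarith

/-- Rotate a triple sum. -/
lemma sum_rot {α β γ M : Type*} [AddCommMonoid M] [Fintype α] [Fintype β] [Fintype γ]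
    (f : α → β → γ → M) :
    ∑ x, ∑ y, ∑ z, f x y z = ∑ z, ∑ x, ∑ y, f x y z :=
  (Finset.sum_congr rfl fun _ _ => Finset.sum_comm).trans Finset.sum_comm

/-- The trivial case: exponent is nonpositive. -/
lemma trivial_case (n : ℕ) (H : Submodule ℂ (Fin n → ℂ)) {a : ℝ} (ha : a ≤ 0) (N₀ : ℕ) :
    ∃ N : ℕ, N₀ ≤ N ∧ ∃ X : Fin n → Set ℂ,
      (∀ i, (X i).Finite ∧ (X i).ncard ≤ N) ∧
      (({x : Fin n → ℂ | x ∈ H ∧ ∀ i, x i ∈ X i}).ncard : ℝ) ≥ (N : ℝ) ^ a := by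
  refine ⟨max N₀ 1, le_max_left _ _, fun _ => {0}, ?_, ?_⟩
  · intro i
    refine ⟨Set.finite_singleton 0, ?_⟩
    rw [Set.ncard_singleton]
    exact le_max_right _ _
  · have hset : {x : Fin n → ℂ | x ∈ H ∧ ∀ i, x i ∈ ({0} : Set ℂ)} = {0} := by
      ext x
      constructor
      · rintro ⟨-, hx⟩
        have : x = 0 := funext fun i => hx i
        simpa using this
      · intro hx
        rw [Set.mem_singleton_iff] at hx
        subst hx
        exact ⟨H.zero_mem, fun i => rfl⟩
    rw [hset, Set.ncard_singleton]
    have h1 : (1:ℝ) ≤ ((max N₀ 1 : ℕ) : ℝ) := by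
      exact_mod_cast le_max_right N₀ 1
    calc ((max N₀ 1 : ℕ) : ℝ) ^ a ≤ 1 := Real.rpow_le_one_of_one_le_of_nonpos h1 ha
      _ = ((1:ℕ) : ℝ) := by norm_num

end Statement7Aux

open Statement7Aux

/-- linear subspaces admit no power-saving: if `H ≤ ℂⁿ` is a
`ℂ`-linear subspace of dimension `k`, then for every `ε > 0` and every `N₀` there
are `N ≥ N₀` and finite sets `X₁, …, Xₙ ⊆ ℂ` with `|Xᵢ| ≤ N` such that
`|H ∩ (X₁ × ⋯ × Xₙ)| ≥ N^(k−ε)`. -/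
theorem statement7 (n k : ℕ) (hn : 1 ≤ n) (H : Submodule ℂ (Fin n → ℂ))
    (hk : Module.finrank ℂ H = k) :
    ∀ ε : ℝ, 0 < ε → ∀ N₀ : ℕ, ∃ N : ℕ, N₀ ≤ N ∧
      ∃ X : Fin n → Set ℂ,
        (∀ i, (X i).Finite ∧ (X i).ncard ≤ N) ∧
        (({x : Fin n → ℂ | x ∈ H ∧ ∀ i, x i ∈ X i}).ncard : ℝ)
          ≥ (N : ℝ) ^ ((k : ℝ) - ε) := by
  intro ε hε N₀
  rcases le_or_gt ((k:ℝ) - ε) 0 with ha | ha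
  · exact trivial_case n H ha N₀
  -- Main case: `a := k - ε > 0`.
  set a : ℝ := (k:ℝ) - ε with ha_def
  have hk1 : 1 ≤ k := by
    rcases Nat.eq_zero_or_pos k with rfl | h
    · exfalso; rw [ha_def] at ha; push_cast at ha; linarith
    · exact h
  have hkpos : 0 < Module.finrank ℂ H := hk ▸ hk1
  haveI : Module.Finite ℂ H := Module.finite_of_finrank_pos hkpos
  let bH : Basis (Fin k) ℂ H := Module.finBasisOfFinrankEq ℂ H hk
  let b : Fin k → (Fin n → ℂ) := fun j => (bH j : Fin n → ℂ)
  have hbH : ∀ j, b j ∈ H := fun j => (bH j).2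
  have hb_li : LinearIndependent ℂ b :=
    bH.linearIndependent.map' H.subtype H.ker_subtype
  -- the generators and the filtration
  let g : Fin k × Fin n → ℂ := fun p => b p.1 p.2
  let G : Set ℂ := insert 1 (Set.range g)
  have hGfin : G.Finite := (Set.finite_range g).insert 1
  have hpowfin : ∀ D : ℕ, (G ^ D).Finite := by
    intro D
    induction D with
    | zero => rw [pow_zero]; exact Set.finite_one
    | succ D ih => rw [pow_succ]; exact ih.mul hGfin
  let P : ℕ → Submodule ℤ ℂ := fun D => span ℤ (G ^ D)
  have hfinmod : ∀ D, Module.Finite ℤ (P D) :=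
    fun D => Module.Finite.span_of_finite ℤ (hpowfin D)
  have hfree : ∀ D, Module.Free ℤ (P D) := by
    intro D
    haveI := hfinmod D
    exact Module.free_of_finite_type_torsion_free'
  let d : ℕ → ℕ := fun D => Module.finrank ℤ ↥(P D)
  have honemem : ∀ D, (1:ℂ) ∈ P D :=
    fun D => subset_span (Set.one_mem_pow (Set.mem_insert 1 _))
  have hd1 : ∀ D, 1 ≤ d D := by
    intro D
    haveI := hfinmod D
    haveI : Nontrivial ↥(P D) :=
      ⟨⟨1, honemem D⟩, 0, fun h => one_ne_zero (congrArg Subtype.val h)⟩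
    exact Module.finrank_pos
  have hpoly : ∀ D, d D ≤ (D + 1) ^ (Fintype.card (Fin k × Fin n)) := by
    intro D
    have hsub := pow_subset_monomials g D
    have h1 : Module.rank ℤ ↥(P D) ≤ Module.rank ℤ
        ↥(span ℤ (Set.range (fun e : Fin k × Fin n → Fin (D+1) =>
          ∏ p, g p ^ (e p : ℕ)))) := by
      apply Submodule.rank_mono
      apply span_mono
      intro x hx
      obtain ⟨e, he, rfl⟩ := hsub hx
      exact ⟨fun p => ⟨e p, Nat.lt_succ_of_le (he p)⟩, rfl⟩
    have h2 : Module.rank ℤ ↥(P D) ≤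
        (((D + 1) ^ (Fintype.card (Fin k × Fin n)) : ℕ) : Cardinal) := by
      refine h1.trans ((rank_span_le _).trans ?_)
      refine Cardinal.mk_range_le.trans ?_
      simp [Cardinal.mk_fintype]
    exact Module.finrank_le_of_rank_le h2
  -- choose a level `D` with slow growth
  have hδ : (0:ℝ) < ε / (2 * a) := by positivity
  obtain ⟨D, hD1, hratio⟩ := exists_slow_growth _ d hd1 hpoly hδ
  haveI := hfinmod D
  haveI := hfree D
  haveI := hfinmod (D + 1)
  haveI := hfree (D + 1)
  set ι₁ := Module.Free.ChooseBasisIndex ℤ ↥(P D) with hι₁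
  set ι₂ := Module.Free.ChooseBasisIndex ℤ ↥(P (D + 1)) with hι₂
  let E : Basis ι₁ ℤ ↥(P D) := Module.Free.chooseBasis ℤ ↥(P D)
  let E' : Basis ι₂ ℤ ↥(P (D + 1)) := Module.Free.chooseBasis ℤ ↥(P (D + 1))
  have hcard1 : Fintype.card ι₁ = d D :=
    (Module.finrank_eq_card_chooseBasisIndex ℤ _).symm
  have hcard2 : Fintype.card ι₂ = d (D + 1) :=
    (Module.finrank_eq_card_chooseBasisIndex ℤ _).symm
  let e : ι₁ → ℂ := fun s => (E s : ℂ)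
  let e' : ι₂ → ℂ := fun r => (E' r : ℂ)
  have he_li : LinearIndependent ℤ e :=
    E.linearIndependent.map' (P D).subtype (ker_subtype _)
  have hmul : ∀ (j : Fin k) (i : Fin n) (s : ι₁), e s * b j i ∈ P (D + 1) := by
    intro j i s
    have h1 : e s ∈ P D := (E s).2
    have h2 : b j i ∈ span ℤ G :=
      subset_span (Set.mem_insert_iff.mpr (Or.inr ⟨(j, i), rfl⟩))
    have h3 := Submodule.mul_mem_mul h1 h2
    rwa [span_mul_span, ← pow_succ] at h3
  let q : Fin n → Fin k → ι₁ → ι₂ → ℤ :=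
    fun i j s r => E'.repr ⟨e s * b j i, hmul j i s⟩ r
  let Q : ℕ := Finset.univ.sup
    (fun x : (Fin n × Fin k) × ι₁ × ι₂ => (q x.1.1 x.1.2 x.2.1 x.2.2).natAbs)
  have hQ : ∀ i j s r, |q i j s r| ≤ (Q : ℤ) := by
    intro i j s r
    have h := Finset.le_sup (f := fun x : (Fin n × Fin k) × ι₁ × ι₂ =>
      (q x.1.1 x.1.2 x.2.1 x.2.2).natAbs) (Finset.mem_univ ((i, j), s, r))
    rw [Int.abs_eq_natAbs]
    exact_mod_cast h
  set K : ℕ := k * d D * Q + 1 with hK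
  -- choose M
  set CR : ℝ := ((2 * K + 1 : ℕ) : ℝ) with hCR
  have hCR1 : (1:ℝ) ≤ CR := by rw [hCR]; exact_mod_cast Nat.succ_le_succ (Nat.zero_le _)
  obtain ⟨M₁, hM₁⟩ := exists_nat_ge
    (CR ^ (((d (D + 1) : ℝ) * a) / ((d D : ℝ) * (ε / 2))))
  set M : ℕ := max (max N₀ 1) M₁ with hM
  have hM1 : 1 ≤ M := le_trans (le_max_right N₀ 1) (le_max_left _ _)
  have hMN₀ : N₀ ≤ M := le_trans (le_max_left N₀ 1) (le_max_left _ _)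
  have hM1R : (1:ℝ) ≤ (M:ℝ) := by exact_mod_cast hM1
  have hMkey : CR ^ ((d (D + 1) : ℝ) * a) ≤ (M:ℝ) ^ ((d D : ℝ) * (ε / 2)) := by
    have hy : (0:ℝ) < (d D : ℝ) * (ε / 2) := by
      have : (0:ℝ) < (d D : ℝ) := by exact_mod_cast hd1 D
      positivity
    have hbase : CR ^ (((d (D + 1) : ℝ) * a) / ((d D : ℝ) * (ε / 2))) ≤ (M:ℝ) :=
      le_trans hM₁ (by exact_mod_cast le_max_right (max N₀ 1) M₁)
    have h1 : (CR ^ (((d (D + 1) : ℝ) * a) / ((d D : ℝ) * (ε / 2))))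
        ^ ((d D : ℝ) * (ε / 2)) ≤ (M:ℝ) ^ ((d D : ℝ) * (ε / 2)) :=
      Real.rpow_le_rpow (Real.rpow_nonneg (by linarith) _) hbase (le_of_lt hy)
    rwa [← Real.rpow_mul (by linarith : (0:ℝ) ≤ CR),
      div_mul_cancel₀ _ (ne_of_gt hy)] at h1
  -- the family of points
  have hMpos : 0 < M := hM1
  haveI : NeZero M := ⟨Nat.one_le_iff_ne_zero.mp hM1⟩
  let Φ : (Fin k → ι₁ → Fin M) → (Fin n → ℂ) :=
    fun c => ∑ j, (∑ s, ((c j s : ℕ) : ℂ) * e s) • b j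
  have hΦinj : Function.Injective Φ := by
    intro c c' hcc
    have h1 : (fun j => ∑ s, ((c j s : ℕ) : ℂ) * e s)
        = (fun j => ∑ s, ((c' j s : ℕ) : ℂ) * e s) := by
      apply inj_sum_smul hb_li
      simpa only [smul_eq_mul] using hcc
    funext j s
    have h2 : ∑ s, (((c j s : ℕ) : ℤ)) • e s = ∑ s, (((c' j s : ℕ) : ℤ)) • e s := by
      have h3 := congrFun h1 j
      simp only [zsmul_eq_mul]
      push_cast
      exact h3
    have h4 := congrFun (inj_sum_smul he_li h2) s
    have : (c j s : ℕ) = (c' j s : ℕ) := by exact_mod_cast h4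
    exact Fin.ext this
  let X : Fin n → Set ℂ := fun i => Set.range (fun c => Φ c i)
  -- the coordinate identity
  have hcoord : ∀ (c : Fin k → ι₁ → Fin M) (i : Fin n),
      Φ c i = ∑ r, ((∑ j, ∑ s, ((c j s : ℕ) : ℤ) * q i j s r : ℤ) : ℂ) * e' r := by
    intro c i
    have hre : ∀ (j : Fin k) (s : ι₁),
        e s * b j i = ∑ r, ((q i j s r : ℤ) : ℂ) * e' r := by
      intro j s
      have h0 := E'.sum_repr ⟨e s * b j i, hmul j i s⟩
      calc e s * b j i
          = ((⟨e s * b j i, hmul j i s⟩ : ↥(P (D + 1))) : ℂ) := rfl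
        _ = ((∑ r, E'.repr ⟨e s * b j i, hmul j i s⟩ r • E' r : ↥(P (D + 1))) : ℂ) := by
            rw [h0]
        _ = ∑ r, ((q i j s r : ℤ) : ℂ) * e' r := by
            simp only [AddSubmonoidClass.coe_finset_sum, SetLike.val_smul, zsmul_eq_mul]
            rfl
    have hΦi : Φ c i = ∑ j, ∑ s, ((c j s : ℕ) : ℂ) * (e s * b j i) := by
      simp only [Φ, Finset.sum_apply, Pi.smul_apply, smul_eq_mul, Finset.sum_mul]
      exact Finset.sum_congr rfl fun j _ =>
        Finset.sum_congr rfl fun s _ => mul_assoc _ _ _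
    rw [hΦi]
    simp only [hre, Finset.mul_sum]
    rw [sum_rot]
    refine Finset.sum_congr rfl fun r _ => ?_
    push_cast
    rw [Finset.sum_mul]
    refine Finset.sum_congr rfl fun j _ => ?_
    rw [Finset.sum_mul]
    exact Finset.sum_congr rfl fun s _ => (mul_assoc _ _ _).symm
  -- bound on the coefficients
  have hbound : ∀ (c : Fin k → ι₁ → Fin M) (i : Fin n) (r : ι₂),
      |∑ j, ∑ s, ((c j s : ℕ) : ℤ) * q i j s r| ≤ ((K * M : ℕ) : ℤ) := by
    intro c i r
    have h1 : |∑ j, ∑ s, ((c j s : ℕ) : ℤ) * q i j s r|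
        ≤ ∑ j : Fin k, ∑ s : ι₁, ((M * Q : ℕ) : ℤ) := by
      refine (Finset.abs_sum_le_sum_abs _ _).trans ?_
      refine Finset.sum_le_sum fun j _ => ?_
      refine (Finset.abs_sum_le_sum_abs _ _).trans ?_
      refine Finset.sum_le_sum fun s _ => ?_
      rw [abs_mul]
      have hc : |((c j s : ℕ) : ℤ)| ≤ (M : ℤ) := by
        rw [abs_of_nonneg (by positivity)]
        exact_mod_cast le_of_lt (c j s).is_lt
      have := hQ i j s r
      calc |((c j s : ℕ) : ℤ)| * |q i j s r| ≤ (M : ℤ) * (Q : ℤ) :=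
            mul_le_mul hc (hQ i j s r) (abs_nonneg _) (by positivity)
        _ = ((M * Q : ℕ) : ℤ) := by push_cast; ring
    refine h1.trans ?_
    have h2 : ∑ j : Fin k, ∑ s : ι₁, ((M * Q : ℕ) : ℤ)
        = ((k * d D * (M * Q) : ℕ) : ℤ) := by
      rw [Finset.sum_const, Finset.sum_const, Finset.card_univ, Finset.card_univ,
        hcard1, Fintype.card_fin]
      push_cast
      ring
    rw [h2]
    have h3 : k * d D * (M * Q) ≤ K * M := by
      calc k * d D * (M * Q) = k * d D * Q * M := by ring
        _ ≤ k * d D * Q * M + M := Nat.le_add_right _ _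
        _ = K * M := by rw [hK]; ring
    exact_mod_cast h3
  -- the containment of coordinate sets in a small box
  set N : ℕ := (2 * K * M + 1) ^ (d (D + 1)) with hN
  have hXsub : ∀ i, X i ⊆ Set.range
      (fun m : ι₂ → Fin (2 * K * M + 1) =>
        ∑ r, ((((m r : ℕ) : ℤ) - (K * M : ℕ)) : ℂ) * e' r) := by
    intro i x hx
    obtain ⟨c, rfl⟩ := hx
    set γ : ι₂ → ℤ := fun r => ∑ j, ∑ s, ((c j s : ℕ) : ℤ) * q i j s r with hγ
    have hγb : ∀ r, -((K * M : ℕ) : ℤ) ≤ γ r ∧ γ r ≤ ((K * M : ℕ) : ℤ) :=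
      fun r => abs_le.mp (hbound c i r)
    refine ⟨fun r => ⟨(γ r + (K * M : ℕ)).toNat, ?_⟩, ?_⟩
    · have h4 := hγb r
      have h5 : 2 * K * M + 1 = K * M + K * M + 1 := by ring
      omega
    · show ∑ r, _ = Φ c i
      rw [hcoord c i]
      refine Finset.sum_congr rfl fun r _ => ?_
      have h4 := hγb r
      congr 1
      show ((((γ r + (K * M : ℕ)).toNat : ℤ) : ℂ)) - ((K * M : ℕ) : ℂ)
          = ((γ r : ℤ) : ℂ)
      rw [Int.toNat_of_nonneg (by omega : (0:ℤ) ≤ γ r + (K * M : ℕ))]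
      push_cast
      ring
  have hXcard : ∀ i, (X i).ncard ≤ N := by
    intro i
    refine (Set.ncard_le_ncard (hXsub i) (Set.finite_range _)).trans ?_
    rw [← Set.image_univ]
    refine (Set.ncard_image_le Set.finite_univ).trans ?_
    rw [Set.ncard_univ, Nat.card_eq_fintype_card, Fintype.card_fun,
      Fintype.card_fin, hcard2]
  -- the point count
  set T : Set (Fin n → ℂ) := {x : Fin n → ℂ | x ∈ H ∧ ∀ i, x i ∈ X i} with hT
  have hTfin : T.Finite := by
    have hfin : {f : Fin n → ℂ | ∀ i, f i ∈ X i}.Finite :=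
      Set.Finite.pi' (fun i => Set.finite_range _)
    exact hfin.subset fun x hx => hx.2
  have hrangeT : Set.range Φ ⊆ T := by
    rintro x ⟨c, rfl⟩
    exact ⟨Submodule.sum_mem _ (fun j _ => Submodule.smul_mem _ _ (hbH j)),
      fun i => ⟨c, rfl⟩⟩
  have hcount : M ^ (k * d D) ≤ T.ncard := by
    have h1 : (Set.range Φ).ncard = M ^ (k * d D) := by
      rw [← Nat.card_coe_set_eq, Nat.card_range_of_injective hΦinj,
        Nat.card_eq_fintype_card, Fintype.card_fun, Fintype.card_fun]
      simp [hcard1, ← pow_mul, mul_comm]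
    calc M ^ (k * d D) = (Set.range Φ).ncard := h1.symm
      _ ≤ T.ncard := Set.ncard_le_ncard hrangeT hTfin
  -- conclusion
  have hN₀N : N₀ ≤ N := by
    have hK1 : 1 ≤ K := Nat.succ_le_succ (Nat.zero_le _)
    have h1 : 2 * K * M + 1 ≥ M := by
      calc M = 1 * M := (one_mul M).symm
        _ ≤ 2 * K * M := Nat.mul_le_mul_right M (by omega)
        _ ≤ 2 * K * M + 1 := Nat.le_succ _
    have h2 : (2 * K * M + 1) ^ 1 ≤ N := by
      rw [hN]
      exact Nat.pow_le_pow_right (by positivity) (hd1 (D + 1))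
    calc N₀ ≤ M := hMN₀
      _ ≤ 2 * K * M + 1 := h1
      _ = (2 * K * M + 1) ^ 1 := (pow_one _).symm
      _ ≤ N := h2
  refine ⟨N, hN₀N, X, fun i => ⟨Set.finite_range _, hXcard i⟩, ?_⟩
  -- the real-number estimate
  have hMposR : (0:ℝ) < (M:ℝ) := by exact_mod_cast hMpos
  have hdd : (0:ℝ) < (d D : ℝ) := by exact_mod_cast hd1 D
  have hδa : ε / (2 * a) * a = ε / 2 := by field_simp
  have hexp : (d (D + 1) : ℝ) * a ≤ (d D : ℝ) * (a + ε / 2) := by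
    have := hratio
    have h2 : (d (D + 1) : ℝ) * a ≤ ((1 + ε / (2 * a)) * (d D : ℝ)) * a :=
      mul_le_mul_of_nonneg_right this (le_of_lt ha)
    calc (d (D + 1) : ℝ) * a ≤ ((1 + ε / (2 * a)) * (d D : ℝ)) * a := h2
      _ = (d D : ℝ) * (a + ε / (2 * a) * a) := by ring
      _ = (d D : ℝ) * (a + ε / 2) := by rw [hδa]
  have hbase_le : ((2 * K * M + 1 : ℕ) : ℝ) ≤ CR * (M : ℝ) := by
    have hnat : 2 * K * M + 1 ≤ (2 * K + 1) * M := by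
      have h6 : 2 * K * M + 1 ≤ 2 * K * M + M := Nat.add_le_add_left hM1 _
      simpa [Nat.add_mul, one_mul] using h6
    rw [hCR]
    exact_mod_cast hnat
  have hfinal : ((N : ℕ) : ℝ) ^ a ≤ ((M : ℝ)) ^ ((k : ℝ) * (d D : ℝ)) := by
    have hNb : ((N : ℕ) : ℝ) = ((2 * K * M + 1 : ℕ) : ℝ) ^ (d (D + 1) : ℕ) := by
      rw [hN]; push_cast; ring
    have hb0 : (0:ℝ) ≤ ((2 * K * M + 1 : ℕ) : ℝ) := by positivity
    calc ((N : ℕ) : ℝ) ^ a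
        = (((2 * K * M + 1 : ℕ) : ℝ) ^ ((d (D + 1) : ℕ) : ℝ)) ^ a := by
          rw [hNb, Real.rpow_natCast]
      _ = ((2 * K * M + 1 : ℕ) : ℝ) ^ ((d (D + 1) : ℝ) * a) := by
          rw [← Real.rpow_mul hb0]
      _ ≤ (CR * (M : ℝ)) ^ ((d (D + 1) : ℝ) * a) := by
          apply Real.rpow_le_rpow hb0 hbase_le
          positivity
      _ = CR ^ ((d (D + 1) : ℝ) * a) * (M : ℝ) ^ ((d (D + 1) : ℝ) * a) := by
          rw [Real.mul_rpow (by linarith) (le_of_lt hMposR)]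
      _ ≤ (M:ℝ) ^ ((d D : ℝ) * (ε / 2)) * (M : ℝ) ^ ((d (D + 1) : ℝ) * a) := by
          apply mul_le_mul_of_nonneg_right hMkey
          positivity
      _ = (M:ℝ) ^ ((d D : ℝ) * (ε / 2) + (d (D + 1) : ℝ) * a) := by
          rw [← Real.rpow_add hMposR]
      _ ≤ (M:ℝ) ^ ((k : ℝ) * (d D : ℝ)) := by
          apply Real.rpow_le_rpow_of_exponent_le hM1R
          have : a + ε = (k : ℝ) := by rw [ha_def]; ring
          nlinarith [hexp]
  have hcountR : ((M : ℝ)) ^ ((k : ℝ) * (d D : ℝ)) ≤ (T.ncard : ℝ) := by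
    have h1 : ((M : ℝ)) ^ ((k : ℝ) * (d D : ℝ)) = ((M ^ (k * d D) : ℕ) : ℝ) := by
      rw [show ((k : ℝ) * (d D : ℝ)) = ((k * d D : ℕ) : ℝ) by push_cast; ring,
        Real.rpow_natCast]
      push_cast
      ring
    rw [h1]
    exact_mod_cast hcount
  exact le_trans hfinal hcountR



end
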